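/- A univariate polynomial f ∈ ℝ[t] is non-negative on all of ℝ if and only if both f(t) and f(−t) are non-negative on ℝ₊. Consequently, if f has at most 2k+1 monomials and is non-negative on ℝ, then both f(t) and f(−t) admit decompositions as sums Σ_i t^i σ_i with σ_i sums of squares of degree at most 2k. -/

import Mathlib

open Polynomial

/-- `g` admits a sparse decomposition `g = Σ_i t^i σ_i` with each `σ_i` a sum of squares
of polynomials of degree at most `k` (hence `deg σ_i ≤ 2k`). -/
def HasSparseSOSDecomp (k : ℕ) (g : Polynomial ℝ) : Prop :=
  ∃ (numSummands : ℕ) (σ : ℕ → Polynomial ℝ),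
    (∀ i, ∃ (l : ℕ) (h : Fin l → Polynomial ℝ),
      (∀ j, (h j).natDegree ≤ k) ∧ σ i = ∑ j, h j ^ 2) ∧
    g = ∑ i ∈ Finset.range numSummands, X ^ i * σ i

noncomputable section Stmt18Aux

/-- integer sign of a real -/
def sgn (x : ℝ) : ℤ := if x < 0 then -1 else if 0 < x then 1 else 0

lemma sgn_eq_zero_iff {x : ℝ} : sgn x = 0 ↔ x = 0 := by
  unfold sgn
  rcases lt_trichotomy x 0 with h | h | h
  · simp [h, h.ne]
  · simp [h]
  · simp [not_lt.2 h.le, h, h.ne']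

lemma sgn_of_pos {x : ℝ} (h : 0 < x) : sgn x = 1 := by simp [sgn, h, not_lt.2 h.le]
lemma sgn_of_neg {x : ℝ} (h : x < 0) : sgn x = -1 := by simp [sgn, h]

lemma sgn_cases (x : ℝ) : sgn x = 0 ∨ sgn x = 1 ∨ sgn x = -1 := by
  rcases lt_trichotomy x 0 with h | h | h
  · right; right; exact sgn_of_neg h
  · left; simp [sgn_eq_zero_iff, h]
  · right; left; exact sgn_of_pos h

lemma sgn_neg_mul {r x : ℝ} (hr : 0 < r) : sgn (-r * x) = - sgn x := by
  rcases lt_trichotomy x 0 with h | h | h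
  · rw [sgn_of_neg h, sgn_of_pos (by nlinarith)]; rfl
  · simp [h, sgn_eq_zero_iff.2 rfl]
  · rw [sgn_of_pos h, sgn_of_neg (by nlinarith)]

lemma sgn_add_same {a b : ℝ} (ha : a ≠ 0) (hab : sgn a = sgn b) : sgn (a + b) = sgn a := by
  rcases lt_trichotomy a 0 with h | h | h
  · rw [sgn_of_neg h] at *
    have hb : b ≤ 0 := by
      by_contra hb; push_neg at hb; rw [sgn_of_pos hb] at hab; omega
    exact sgn_of_neg (by linarith)
  · exact absurd h ha
  · rw [sgn_of_pos h] at *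
    have hb : 0 ≤ b := by
      by_contra hb; push_neg at hb; rw [sgn_of_neg hb] at hab; omega
    exact sgn_of_pos (by linarith)

/-- sign list: signs of nonzero entries -/
def SL (l : List ℝ) : List ℤ := (l.map sgn).filter (· ≠ 0)

@[simp] lemma SL_nil : SL [] = [] := rfl

lemma SL_cons (x : ℝ) (l : List ℝ) :
    SL (x :: l) = if x = 0 then SL l else sgn x :: SL l := by
  unfold SL
  by_cases h : x = 0
  · simp [h, List.filter, sgn_eq_zero_iff.2 rfl]
  · rw [if_neg h]
    simp only [List.map_cons]
    rw [List.filter_cons_of_pos (by simp [sgn_eq_zero_iff, h])]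

lemma SL_eq_nil {l : List ℝ} (h : ∀ x ∈ l, x = 0) : SL l = [] := by
  induction l with
  | nil => rfl
  | cons a t ih =>
    rw [SL_cons, if_pos (h a (by simp))]
    exact ih fun x hx => h x (by simp [hx])

lemma SL_ne_nil {l : List ℝ} {x : ℝ} (hx : x ∈ l) (h : x ≠ 0) : SL l ≠ [] := by
  induction l with
  | nil => simp at hx
  | cons a t ih =>
    rw [SL_cons]
    rcases List.mem_cons.1 hx with rfl | hx'
    · rw [if_neg h]; simp
    · by_cases ha : a = 0
      · rw [if_pos ha]; exact ih hx'
      · rw [if_neg ha]; simp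

lemma mem_SL {l : List ℝ} {a : ℤ} (h : a ∈ SL l) : a = 1 ∨ a = -1 := by
  unfold SL at h
  obtain ⟨ha, hne⟩ := List.mem_filter.1 h
  obtain ⟨x, _, rfl⟩ := List.mem_map.1 ha
  rcases sgn_cases x with h0 | h1 | h2
  · simp [h0] at hne
  · exact Or.inl h1
  · exact Or.inr h2

lemma SL_append_zeros {l m : List ℝ} (h : ∀ x ∈ m, x = 0) : SL (l ++ m) = SL l := by
  unfold SL
  rw [List.map_append, List.filter_append]
  have : (m.map sgn).filter (· ≠ 0) = SL m := rfl
  rw [this, SL_eq_nil h, List.append_nil]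

/-- sign changes in a list -/
def chg : List ℤ → ℕ
  | a :: b :: t => (if a = b then 0 else 1) + chg (b :: t)
  | _ => 0

@[simp] lemma chg_nil : chg [] = 0 := rfl
@[simp] lemma chg_singleton (a : ℤ) : chg [a] = 0 := rfl

lemma chg_cons_cons (a b : ℤ) (t : List ℤ) :
    chg (a :: b :: t) = (if a = b then 0 else 1) + chg (b :: t) := rfl

lemma chg_cons (a : ℤ) {m : List ℤ} (hm : m ≠ []) :
    chg (a :: m) = (if a = m.headI then 0 else 1) + chg m := by
  cases m with
  | nil => simp at hm
  | cons b t => rfl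

lemma chg_cons_le (a : ℤ) (m : List ℤ) : chg (a :: m) ≤ 1 + chg m := by
  cases m with
  | nil => simp [chg]
  | cons b t => rw [chg_cons_cons]; split <;> omega

lemma chg_le_cons (a : ℤ) (m : List ℤ) : chg m ≤ chg (a :: m) := by
  cases m with
  | nil => simp
  | cons b t => rw [chg_cons_cons]; omega

lemma chg_cons_same (a b : ℤ) (m : List ℤ) (h : a = b) : chg (a :: m) = chg (b :: m) := by rw [h]

lemma chg_eq_zero_all_eq {l : List ℤ} (h : chg l = 0) : ∀ a ∈ l, ∀ b ∈ l, a = b := by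
  induction l with
  | nil => simp
  | cons a t ih =>
    cases t with
    | nil => simp
    | cons c u =>
      rw [chg_cons_cons] at h
      have hac : a = c := by by_contra hne; simp [hne] at h
      have h2 : chg (c :: u) = 0 := by omega
      intro x hx y hy
      have key : ∀ z ∈ a :: c :: u, z = c := by
        intro z hz
        rcases List.mem_cons.1 hz with rfl | hz'
        · exact hac
        · exact ih h2 z hz' c (by simp)
      rw [key x hx, key y hy]

lemma chg_le_length (l : List ℤ) : chg l + 1 ≤ l.length ∨ l = [] := by
  induction l with
  | nil => right; rfl
  | cons a t ih =>
    left
    cases t with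
    | nil => simp
    | cons b u =>
      rw [chg_cons_cons]
      rcases ih with h | h
      · simp only [List.length_cons] at *; split <;> omega
      · simp at h

/-- the `(X - r)·` transform on coefficient lists -/
def Tr (r : ℝ) : List ℝ → List ℝ
  | [] => [0]
  | x :: l => (-r * x) :: (Tr r l).modifyHead (· + x)

lemma Tr_length (r : ℝ) (l : List ℝ) : (Tr r l).length = l.length + 1 := by
  induction l with
  | nil => rfl
  | cons a t ih => simp [Tr, List.length_modifyHead, ih]

lemma Tr_ne_nil (r : ℝ) (l : List ℝ) : Tr r l ≠ [] := by
  have := Tr_length r l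
  intro h; rw [h] at this; simp at this

lemma Tr_zero (r : ℝ) {l : List ℝ} (h : ∀ x ∈ l, x = 0) : ∀ y ∈ Tr r l, y = 0 := by
  induction l with
  | nil => intro y hy; simp [Tr] at hy; exact hy
  | cons a t ih =>
    intro y hy
    simp only [Tr] at hy
    obtain ⟨z, u, hu⟩ := List.exists_cons_of_ne_nil (Tr_ne_nil r t)
    rw [hu] at hy
    have ht : ∀ x ∈ t, x = 0 := fun x hx => h x (by simp [hx])
    have ha : a = 0 := h a (by simp)
    rcases List.mem_cons.1 hy with rfl | hy'
    · rw [ha]; ring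
    · rw [List.modifyHead] at hy'
      rcases List.mem_cons.1 hy' with rfl | hy''
      · have := ih ht z (by rw [hu]; simp)
        rw [this, ha]; ring
      · exact ih ht y (by rw [hu]; simp [hy''])

lemma headI_SL_ne_zero {l : List ℝ} (h : SL l ≠ []) : (SL l).headI = 1 ∨ (SL l).headI = -1 := by
  obtain ⟨a, t, ht⟩ := List.exists_cons_of_ne_nil h
  rw [ht]; exact mem_SL (by rw [ht]; simp)

theorem Tr_chg {r : ℝ} (hr : 0 < r) :
    ∀ l : List ℝ, (∃ x ∈ l, x ≠ 0) →
    chg (SL l) + 1 ≤ chg (SL (Tr r l)) ∧ (SL (Tr r l)).headI = -((SL l).headI) := by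
  intro l
  induction l with
  | nil => rintro ⟨x, hx, -⟩; simp at hx
  | cons x l' ih =>
    rintro ⟨w, hw, hwne⟩
    by_cases hx : x = 0
    · -- head is zero, reduce to tail
      have hw' : w ∈ l' := by
        rcases List.mem_cons.1 hw with rfl | h
        exacts [absurd hx hwne, h]
      obtain ⟨H1, H2⟩ := ih ⟨w, hw', hwne⟩
      subst hx
      have hTr : Tr r (0 :: l') = 0 :: Tr r l' := by
        simp only [Tr, mul_zero]
        congr 1
        obtain ⟨z, u, hu⟩ := List.exists_cons_of_ne_nil (Tr_ne_nil r l')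
        rw [hu]; simp [List.modifyHead]
      rw [hTr, SL_cons, if_pos rfl, SL_cons, if_pos rfl]
      exact ⟨H1, H2⟩
    · have hrx : -r * x ≠ 0 := by intro h; exact hx (by nlinarith [hr])
      have hσpm : sgn x = 1 ∨ sgn x = -1 := by
        rcases sgn_cases x with h0 | h1 | h1
        · exact absurd (sgn_eq_zero_iff.1 h0) hx
        · exact Or.inl h1
        · exact Or.inr h1
      have hsgnrx : sgn (-r * x) = -(sgn x) := sgn_neg_mul hr
      by_cases hl' : ∀ y ∈ l', y = 0
      · -- tail all zero: base-like case
        have hTl' : ∀ y ∈ Tr r l', y = 0 := Tr_zero r hl'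
        obtain ⟨z, u, hu⟩ := List.exists_cons_of_ne_nil (Tr_ne_nil r l')
        have hz : z = 0 := hTl' z (by rw [hu]; simp)
        have hu0 : ∀ y ∈ u, y = 0 := fun y hy => hTl' y (by rw [hu]; simp [hy])
        have hTr : Tr r (x :: l') = (-r * x) :: (z + x) :: u := by
          simp only [Tr, hu, List.modifyHead]
        have hzx : z + x = x := by rw [hz]; ring
        have e1 : SL (-r * x :: (z + x) :: u) = [sgn (-r * x), sgn x] := by
          rw [SL_cons, if_neg hrx, hzx, SL_cons, if_neg hx, SL_eq_nil hu0]
        have e2 : SL (x :: l') = [sgn x] := by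
          rw [SL_cons, if_neg hx, SL_eq_nil hl']
        rw [hTr, e1, e2]
        constructor
        · rw [chg_cons_cons, if_neg (by rw [hsgnrx]; rcases hσpm with h|h <;> rw [h] <;> omega)]
          simp
        · simpa using hsgnrx
      · -- main case: x ≠ 0, l' contains a nonzero
        push_neg at hl'
        obtain ⟨w', hw', hw'ne⟩ := hl'
        obtain ⟨IH1, IH2⟩ := ih ⟨w', hw', hw'ne⟩
        have hSLl' : SL l' ≠ [] := SL_ne_nil hw' hw'ne
        have hτpm : (SL l').headI = 1 ∨ (SL l').headI = -1 := headI_SL_ne_zero hSLl'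
        obtain ⟨y, u', hu⟩ := List.exists_cons_of_ne_nil (Tr_ne_nil r l')
        have hTr : Tr r (x :: l') = (-r * x) :: (y + x) :: u' := by
          simp only [Tr, hu, List.modifyHead]
        have hSLx : SL (x :: l') = sgn x :: SL l' := by rw [SL_cons, if_neg hx]
        have hchgx : chg (SL (x :: l')) = (if sgn x = (SL l').headI then 0 else 1) + chg (SL l') := by
          rw [hSLx, chg_cons _ hSLl']
        have e1 : SL (-r * x :: (y + x) :: u') = -sgn x :: SL ((y + x) :: u') := by
          rw [SL_cons, if_neg hrx, hsgnrx]
        refine ⟨?_, by rw [hTr, e1, hSLx]; simp⟩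
        rw [hTr, e1, hchgx]
        have hne1 : ¬(-sgn x = sgn x) := by rcases hσpm with h|h <;> rw [h] <;> omega
        by_cases hy : y = 0
        · -- Case B
          have hSLTl' : SL (Tr r l') = SL u' := by rw [hu, SL_cons, if_pos hy]
          have hSLu' : SL u' ≠ [] := by
            intro hnil
            rw [hSLTl', hnil] at IH1
            simp only [chg_nil] at IH1
            omega
          have hheadu' : (SL u').headI = -((SL l').headI) := by rw [← hSLTl', IH2]
          have hyx : y + x = x := by rw [hy]; ring
          have e2 : SL ((y + x) :: u') = sgn x :: SL u' := by rw [hyx, SL_cons, if_neg hx]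
          have hIH1' : chg (SL l') + 1 ≤ chg (SL u') := by rw [← hSLTl']; exact IH1
          rw [e2, chg_cons_cons, if_neg hne1, chg_cons _ hSLu', hheadu']
          by_cases hd : sgn x = (SL l').headI
          · rw [if_pos hd]
            split <;> omega
          · rw [if_neg hd]
            have hd2 : sgn x = -(SL l').headI := by
              rcases hσpm with hs | hs <;> rcases hτpm with ht | ht <;> rw [hs, ht] at hd ⊢ <;> omega
            rw [if_pos hd2]
            omega
        · -- Case A : y ≠ 0
          have hSLTl' : SL (Tr r l') = sgn y :: SL u' := by rw [hu, SL_cons, if_neg hy]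
          have hsy : sgn y = -((SL l').headI) := by
            have := IH2; rw [hSLTl'] at this; simpa using this
          have hIH1' : chg (SL l') + 1 ≤ chg (sgn y :: SL u') := by rw [← hSLTl']; exact IH1
          by_cases hστ : sgn x = -((SL l').headI)
          · -- sgn x = sgn y : definite sum
            have hsxy : sgn y = sgn x := by rw [hsy, ← hστ]
            have hsyx : sgn (y + x) = sgn y := sgn_add_same hy hsxy
            have hyxne : y + x ≠ 0 := by
              intro h
              rw [h, sgn_eq_zero_iff.2 rfl] at hsyx
              rw [← hsyx] at hsy
              rcases hτpm with ht | ht <;> rw [ht] at hsy <;> omega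
            have e2 : SL ((y + x) :: u') = sgn x :: SL u' := by
              rw [SL_cons, if_neg hyxne, hsyx, hsxy]
            rw [e2, chg_cons_cons, if_neg hne1]
            have h3 : chg (sgn x :: SL u') = chg (sgn y :: SL u') := chg_cons_same _ _ _ hsxy.symm
            have hc : (if sgn x = (SL l').headI then (0:ℕ) else 1) ≤ 1 := by split <;> omega
            omega
          · -- sgn x = headI (SL l'), sgn y = -sgn x
            have hst : sgn x = (SL l').headI := by
              rcases hσpm with hs | hs <;> rcases hτpm with ht | ht <;>
                rw [hs, ht] at hστ ⊢ <;> omega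
            rw [if_pos hst]
            have hxy : -sgn x = sgn y := by rw [hsy, hst]
            by_cases hyx : y + x = 0
            · have e2 : SL ((y + x) :: u') = SL u' := by rw [SL_cons, if_pos hyx]
              rw [e2]
              have h3 : chg (-sgn x :: SL u') = chg (sgn y :: SL u') := chg_cons_same _ _ _ hxy
              omega
            · have e2 : SL ((y + x) :: u') = sgn (y + x) :: SL u' := by rw [SL_cons, if_neg hyx]
              rw [e2]
              by_cases hs' : sgn (y + x) = -(sgn x)
              · rw [hs', chg_cons_cons, if_pos rfl]
                have h3 : chg (-sgn x :: SL u') = chg (sgn y :: SL u') := chg_cons_same _ _ _ hxy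
                omega
              · rw [chg_cons_cons, if_neg (fun h => hs' h.symm)]
                have h1 := chg_cons_le (sgn y) (SL u')
                have h2 := chg_le_cons (sgn (y + x)) (SL u')
                omega

/-! ### Polynomial bridge -/

def cl (f : ℝ[X]) : List ℝ := (List.range (f.natDegree + 1)).map (fun i => f.coeff i)

def Vc (f : ℝ[X]) : ℕ := chg (SL (cl f))

lemma cl_getD (g : ℝ[X]) (i : ℕ) : (cl g).getD i 0 = g.coeff i := by
  by_cases h : i < g.natDegree + 1
  · rw [List.getD_eq_getElem _ _ (by simpa [cl] using h)]
    simp [cl]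
  · rw [List.getD_eq_default _ _ (by simpa [cl] using not_lt.1 h)]
    exact (coeff_eq_zero_of_natDegree_lt (by omega)).symm

lemma SL_range_map (f : ℝ[X]) {n : ℕ} (hn : f.natDegree < n) :
    SL ((List.range n).map (fun i => f.coeff i)) = SL (cl f) := by
  obtain ⟨m, rfl⟩ : ∃ m, n = (f.natDegree + 1) + m := ⟨n - (f.natDegree + 1), by omega⟩
  rw [List.range_add, List.map_append, List.map_map]
  exact SL_append_zeros (by
    intro x hx
    simp only [List.mem_map, List.mem_range, Function.comp] at hx
    obtain ⟨i, -, rfl⟩ := hx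
    exact coeff_eq_zero_of_natDegree_lt (by omega))

lemma Vc_eq_range (f : ℝ[X]) {n : ℕ} (hn : f.natDegree < n) :
    Vc f = chg (SL ((List.range n).map (fun i => f.coeff i))) := by
  rw [SL_range_map f hn]; rfl

lemma Vc_congr_sign {p q : ℝ[X]} (h : ∀ i, sgn (p.coeff i) = sgn (q.coeff i)) : Vc p = Vc q := by
  set n := max (p.natDegree + 1) (q.natDegree + 1) with hn
  rw [Vc_eq_range p (show p.natDegree < n by omega), Vc_eq_range q (show q.natDegree < n by omega)]
  have : SL ((List.range n).map (fun i => p.coeff i)) = SL ((List.range n).map (fun i => q.coeff i)) := by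
    unfold SL
    rw [List.map_map, List.map_map]
    congr 1
    exact List.map_congr_left (fun i _ => h i)
  rw [this]

lemma Vc_X_mul (g : ℝ[X]) : Vc (X * g) = Vc g := by
  by_cases hg : g = 0
  · rw [hg, mul_zero]
  · have hd : (X * g).natDegree = g.natDegree + 1 := by
      rw [natDegree_mul X_ne_zero hg, natDegree_X]; omega
    unfold Vc cl
    rw [hd, List.range_succ_eq_map, List.map_cons, List.map_map]
    have h0 : (X * g).coeff 0 = 0 := by simp [mul_coeff_zero]
    rw [h0, SL_cons, if_pos rfl]
    have hB : List.map ((fun i => (X * g).coeff i) ∘ Nat.succ) (List.range (g.natDegree + 1))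
        = List.map (fun i => g.coeff i) (List.range (g.natDegree + 1)) :=
      List.map_congr_left (fun i _ => by simp [Function.comp, coeff_X_mul])
    rw [hB]

lemma Vc_X_pow_mul (a : ℕ) (g : ℝ[X]) : Vc (X ^ a * g) = Vc g := by
  induction a with
  | zero => simp
  | succ n ih =>
    rw [pow_succ, mul_comm (X ^ n) X, mul_assoc, Vc_X_mul, ih]

lemma Tr_getD_zero (r : ℝ) (l : List ℝ) : (Tr r l).getD 0 0 = -r * (l.getD 0 0) := by
  cases l with
  | nil => simp [Tr]
  | cons x t => simp [Tr]

lemma Tr_getD_succ (r : ℝ) : ∀ (l : List ℝ) (i : ℕ),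
    (Tr r l).getD (i + 1) 0 = l.getD i 0 - r * (l.getD (i + 1) 0) := by
  intro l
  induction l with
  | nil => intro i; simp [Tr]
  | cons x t ih =>
    intro i
    obtain ⟨z, u, hzu⟩ := List.exists_cons_of_ne_nil (Tr_ne_nil r t)
    have hmod : Tr r (x :: t) = (-r * x) :: (z + x) :: u := by simp only [Tr, hzu, List.modifyHead]
    cases i with
    | zero =>
      rw [hmod]
      have hz : z = -r * (t.getD 0 0) := by
        have := Tr_getD_zero r t
        rw [hzu] at this
        simpa using this
      simp [hz]
      ring
    | succ j =>
      rw [hmod]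
      have h3 : (((-r * x) :: (z + x) :: u)).getD (j + 2) 0 = u.getD j 0 := by simp
      have h2 : (Tr r t).getD (j + 1) 0 = u.getD j 0 := by rw [hzu]; simp
      rw [h3, ← h2, ih j]
      simp

lemma cl_X_sub_C_mul {g : ℝ[X]} (hg : g ≠ 0) (r : ℝ) :
    cl ((X - C r) * g) = Tr r (cl g) := by
  have hd : ((X - C r) * g).natDegree = g.natDegree + 1 := by
    rw [natDegree_mul (X_sub_C_ne_zero r) hg, natDegree_X_sub_C]; omega
  have hcoeff0 : ((X - C r) * g).coeff 0 = -r * g.coeff 0 := by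
    rw [sub_mul, coeff_sub, mul_coeff_zero, coeff_X_zero, mul_coeff_zero, coeff_C_zero]
    ring
  have hcoeffs : ∀ i, ((X - C r) * g).coeff (i + 1) = g.coeff i - r * g.coeff (i + 1) := by
    intro i
    rw [sub_mul, coeff_sub, coeff_X_mul, coeff_C_mul]
  apply List.ext_getElem
  · simp [cl, hd, Tr_length]
  · intro i h1 h2
    have hlen : i < g.natDegree + 2 := by simp [cl, hd] at h1; omega
    have e1 : (cl ((X - C r) * g))[i] = ((X - C r) * g).coeff i := by simp [cl]
    have e2 : (Tr r (cl g))[i] = (Tr r (cl g)).getD i 0 :=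
      (List.getD_eq_getElem _ _ h2).symm
    rw [e1, e2]
    cases i with
    | zero => rw [Tr_getD_zero, cl_getD, hcoeff0]
    | succ j => rw [Tr_getD_succ, cl_getD, cl_getD, hcoeffs]

lemma Vc_X_sub_C_mul {g : ℝ[X]} (hg : g ≠ 0) {r : ℝ} (hr : 0 < r) :
    Vc g + 1 ≤ Vc ((X - C r) * g) := by
  unfold Vc
  rw [cl_X_sub_C_mul hg r]
  refine (Tr_chg hr (cl g) ⟨g.coeff g.natDegree, ?_, ?_⟩).1
  · exact List.mem_map.2 ⟨g.natDegree, List.mem_range.2 (by omega), rfl⟩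
  · rw [coeff_natDegree]; exact leadingCoeff_ne_zero.2 hg

lemma sgn_mem_SL_cl {f : ℝ[X]} {i : ℕ} (hi : f.coeff i ≠ 0) : sgn (f.coeff i) ∈ SL (cl f) := by
  unfold SL cl
  rw [List.map_map]
  refine List.mem_filter.2 ⟨List.mem_map.2 ⟨i, List.mem_range.2 ?_, rfl⟩, by
    simpa using (by simpa [sgn_eq_zero_iff] using hi : ¬ sgn (f.coeff i) = 0)⟩
  have := le_natDegree_of_ne_zero hi
  omega

lemma countP_range_eq (p : ℕ → Prop) [DecidablePred p] :
    ∀ n, List.countP (fun i => decide (p i)) (List.range n) = ((Finset.range n).filter p).card := by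
  intro n
  induction n with
  | zero => simp
  | succ n ih =>
    rw [List.range_succ, List.countP_append, Finset.range_add_one, Finset.filter_insert]
    by_cases h : p n
    · rw [if_pos h, Finset.card_insert_of_notMem (by simp), ← ih]
      simp [List.countP_cons, h]
    · rw [if_neg h, ← ih]
      simp [List.countP_cons, h]

lemma SL_cl_length (f : ℝ[X]) : (SL (cl f)).length = f.support.card := by
  unfold SL cl
  rw [List.map_map, ← List.countP_eq_length_filter]
  have h1 : List.countP (fun a => decide (a ≠ 0)) (List.map (sgn ∘ fun i => f.coeff i) (List.range (f.natDegree + 1)))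
      = List.countP (fun i => decide (f.coeff i ≠ 0)) (List.range (f.natDegree + 1)) := by
    rw [List.countP_map]
    apply List.countP_congr
    intro i _
    simp [Function.comp, sgn_eq_zero_iff]
  have h2 : f.support = (Finset.range (f.natDegree + 1)).filter (fun i => f.coeff i ≠ 0) := by
    ext i
    simp only [mem_support_iff, Finset.mem_filter, Finset.mem_range]
    constructor
    · intro h; exact ⟨by have := le_natDegree_of_ne_zero h; omega, h⟩
    · exact fun h => h.2
  rw [h1, h2, countP_range_eq (fun i => f.coeff i ≠ 0)]

lemma Vc_le_of_card {f : ℝ[X]} {k : ℕ} (h : f.support.card ≤ 2 * k + 1) : Vc f ≤ 2 * k := by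
  rcases chg_le_length (SL (cl f)) with h1 | h1
  · rw [SL_cl_length] at h1; unfold Vc; omega
  · unfold Vc; rw [h1]; simp

/-! ### cone closure -/

def IsSOS (k : ℕ) (σ : ℝ[X]) : Prop :=
  ∃ (l : ℕ) (h : Fin l → ℝ[X]), (∀ j, (h j).natDegree ≤ k) ∧ σ = ∑ j, h j ^ 2

lemma isSOS_zero (k : ℕ) : IsSOS k 0 := ⟨0, fun _ => 0, fun j => j.elim0, by simp⟩

lemma isSOS_add {k : ℕ} {p q : ℝ[X]} (hp : IsSOS k p) (hq : IsSOS k q) : IsSOS k (p + q) := by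
  obtain ⟨l1, h1, hd1, rfl⟩ := hp
  obtain ⟨l2, h2, hd2, rfl⟩ := hq
  refine ⟨l1 + l2, Fin.append h1 h2, ?_, ?_⟩
  · intro j
    refine Fin.addCases (fun i => ?_) (fun i => ?_) j
    · rw [Fin.append_left]; exact hd1 i
    · rw [Fin.append_right]; exact hd2 i
  · rw [Fin.sum_univ_add]
    congr 1
    · exact Finset.sum_congr rfl fun j _ => by rw [Fin.append_left]
    · exact Finset.sum_congr rfl fun j _ => by rw [Fin.append_right]

lemma isSOS_C {k : ℕ} {c : ℝ} (hc : 0 ≤ c) : IsSOS k (C c) := by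
  refine ⟨1, fun _ => C (Real.sqrt c), fun j => by simp, ?_⟩
  rw [Fin.sum_univ_one, ← C_pow, Real.sq_sqrt hc]

lemma isSOS_mul_sq {k : ℕ} {σ : ℝ[X]} (s : ℝ[X]) (hs : s.natDegree ≤ 1) (h : IsSOS k σ) :
    IsSOS (k + 1) (s ^ 2 * σ) := by
  obtain ⟨l, hh, hd, rfl⟩ := h
  refine ⟨l, fun j => s * hh j, fun j => le_trans (natDegree_mul_le) (by have := hd j; omega), ?_⟩
  rw [Finset.mul_sum]
  exact Finset.sum_congr rfl fun j _ => by ring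

lemma hsd_iff (k : ℕ) (g : ℝ[X]) :
    HasSparseSOSDecomp k g ↔ ∃ (N : ℕ) (σ : ℕ → ℝ[X]),
      (∀ i, IsSOS k (σ i)) ∧ g = ∑ i ∈ Finset.range N, X ^ i * σ i := Iff.rfl

/-- normalized decomposition: σ vanishes beyond N -/
lemma hsd_norm {k : ℕ} {g : ℝ[X]} (h : HasSparseSOSDecomp k g) :
    ∃ (N : ℕ) (σ : ℕ → ℝ[X]), (∀ i, IsSOS k (σ i)) ∧ (∀ i, N ≤ i → σ i = 0) ∧
      g = ∑ i ∈ Finset.range N, X ^ i * σ i := by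
  obtain ⟨N, σ, hσ, rfl⟩ := h
  refine ⟨N, fun i => if i < N then σ i else 0, fun i => ?_, fun i hi => if_neg (by omega), ?_⟩
  · dsimp only
    split
    · exact hσ _
    · exact isSOS_zero k
  · exact Finset.sum_congr rfl fun i hi => by
      dsimp only
      rw [if_pos (Finset.mem_range.1 hi)]

lemma hsd_zero (k : ℕ) : HasSparseSOSDecomp k 0 :=
  ⟨0, fun _ => 0, fun i => isSOS_zero k, by simp⟩

lemma hsd_add {k : ℕ} {g₁ g₂ : ℝ[X]} (h₁ : HasSparseSOSDecomp k g₁)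
    (h₂ : HasSparseSOSDecomp k g₂) : HasSparseSOSDecomp k (g₁ + g₂) := by
  obtain ⟨N₁, σ₁, hσ₁, hz₁, rfl⟩ := hsd_norm h₁
  obtain ⟨N₂, σ₂, hσ₂, hz₂, rfl⟩ := hsd_norm h₂
  refine ⟨max N₁ N₂, fun i => σ₁ i + σ₂ i, fun i => isSOS_add (hσ₁ i) (hσ₂ i), ?_⟩
  have e : ∀ (N : ℕ) (σ : ℕ → ℝ[X]), (∀ i, N ≤ i → σ i = 0) → N ≤ max N₁ N₂ →
      ∑ i ∈ Finset.range N, X ^ i * σ i = ∑ i ∈ Finset.range (max N₁ N₂), X ^ i * σ i := by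
    intro N σ hz hN
    refine Finset.sum_subset (Finset.range_subset_range.2 hN) ?_
    intro i _ hi
    rw [hz i (by simpa using hi), mul_zero]
  rw [e N₁ σ₁ hz₁ (le_max_left _ _), e N₂ σ₂ hz₂ (le_max_right _ _), ← Finset.sum_add_distrib]
  exact Finset.sum_congr rfl fun i _ => by ring

lemma hsd_monomial (k j : ℕ) {c : ℝ} (hc : 0 ≤ c) : HasSparseSOSDecomp k (C c * X ^ j) := by
  refine ⟨j + 1, fun i => if i = j then C c else 0, fun i => ?_, ?_⟩
  · dsimp only
    split
    · exact isSOS_C hc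
    · exact isSOS_zero k
  · symm
    calc ∑ i ∈ Finset.range (j + 1), X ^ i * (if i = j then C c else 0)
        = ∑ i ∈ Finset.range (j + 1), (if i = j then X ^ i * C c else 0) := by
          refine Finset.sum_congr rfl fun i _ => ?_
          split <;> simp
      _ = X ^ j * C c := by
          rw [Finset.sum_ite_eq' (Finset.range (j + 1)) j (fun i => X ^ i * C c),
            if_pos (Finset.mem_range.2 (by omega))]
      _ = C c * X ^ j := mul_comm _ _

lemma hsd_X_mul {k : ℕ} {g : ℝ[X]} (h : HasSparseSOSDecomp k g) :
    HasSparseSOSDecomp k (X * g) := by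
  obtain ⟨N, σ, hσ, rfl⟩ := h
  refine ⟨N + 1, fun i => if i = 0 then 0 else σ (i - 1), fun i => ?_, ?_⟩
  · dsimp only
    split
    · exact isSOS_zero k
    · exact hσ _
  · rw [Finset.sum_range_succ' (fun i => X ^ i * if i = 0 then 0 else σ (i - 1)) N]
    rw [if_pos rfl, mul_zero, add_zero, Finset.mul_sum]
    refine Finset.sum_congr rfl fun i _ => ?_
    rw [if_neg (Nat.succ_ne_zero i), Nat.add_sub_cancel]
    ring

lemma hsd_X_pow_mul {k : ℕ} {g : ℝ[X]} (a : ℕ) (h : HasSparseSOSDecomp k g) :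
    HasSparseSOSDecomp k (X ^ a * g) := by
  induction a with
  | zero => simpa using h
  | succ n ih =>
    have : X ^ (n + 1) * g = X * (X ^ n * g) := by ring
    rw [this]
    exact hsd_X_mul ih

lemma hsd_sq_mul {k : ℕ} {g : ℝ[X]} (r : ℝ) (h : HasSparseSOSDecomp k g) :
    HasSparseSOSDecomp (k + 1) ((X - C r) ^ 2 * g) := by
  obtain ⟨N, σ, hσ, rfl⟩ := h
  refine ⟨N, fun i => (X - C r) ^ 2 * σ i, fun i =>
    isSOS_mul_sq (X - C r) (by rw [natDegree_X_sub_C]) (hσ i), ?_⟩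
  rw [Finset.mul_sum]
  exact Finset.sum_congr rfl fun i _ => by ring

lemma hsd_of_coeff_nonneg {k : ℕ} {f : ℝ[X]} (h : ∀ i, 0 ≤ f.coeff i) :
    HasSparseSOSDecomp k f := by
  refine ⟨f.natDegree + 1, fun i => C (f.coeff i), fun i => isSOS_C (h i), ?_⟩
  conv_lhs => rw [as_sum_range f]
  exact Finset.sum_congr rfl fun i _ => by rw [← C_mul_X_pow_eq_monomial, mul_comm]

/-! ### analysis -/

lemma copos_leadingCoeff {f : ℝ[X]} (hf : ∀ t : ℝ, 0 ≤ t → 0 ≤ f.eval t) :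
    0 ≤ f.leadingCoeff := by
  by_contra hlc
  push_neg at hlc
  rcases le_or_gt f.degree 0 with hd | hd
  · have hnat : f.natDegree = 0 := natDegree_eq_zero_iff_degree_le_zero.2 hd
    have h0 := hf 0 le_rfl
    rw [← coeff_zero_eq_eval_zero] at h0
    rw [leadingCoeff, hnat] at hlc
    linarith
  · have htend := Polynomial.tendsto_atBot_of_leadingCoeff_nonpos f hd hlc.le
    have h2 : ∀ᶠ t in Filter.atTop, f.eval t < 0 := htend.eventually_lt_atBot 0
    obtain ⟨t, ht1, ht2⟩ := (h2.and (Filter.eventually_ge_atTop (0:ℝ))).exists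
    exact absurd (hf t ht2) (not_le.2 ht1)

lemma exists_X_pow_factor : ∀ (n : ℕ) (f : ℝ[X]), f.natDegree ≤ n → f ≠ 0 →
    ∃ a g, f = X ^ a * g ∧ g.coeff 0 ≠ 0 := by
  intro n
  induction n with
  | zero =>
    intro f hdeg hf
    refine ⟨0, f, by simp, ?_⟩
    intro h0
    exact hf (by
      have := Polynomial.eq_C_of_natDegree_eq_zero (Nat.le_zero.1 hdeg)
      rw [this, h0] at *
      simpa using this)
  | succ n ih =>
    intro f hdeg hf
    by_cases h0 : f.coeff 0 ≠ 0
    · exact ⟨0, f, by simp, h0⟩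
    · push_neg at h0
      obtain ⟨g, rfl⟩ := X_dvd_iff.2 h0
      have hg : g ≠ 0 := fun h => hf (by rw [h, mul_zero])
      have hdg : g.natDegree ≤ n := by
        have := natDegree_mul (X_ne_zero (R := ℝ)) hg
        rw [natDegree_X] at this
        omega
      obtain ⟨a, g', hg', h0'⟩ := ih g hdg hg
      exact ⟨a + 1, g', by rw [hg']; ring, h0'⟩

lemma copos_of_X_pow_mul {a : ℕ} {g : ℝ[X]}
    (hf : ∀ t : ℝ, 0 ≤ t → 0 ≤ (X ^ a * g).eval t) : ∀ t : ℝ, 0 ≤ t → 0 ≤ g.eval t := by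
  have hpos : ∀ t : ℝ, 0 < t → 0 ≤ g.eval t := by
    intro t ht
    have := hf t ht.le
    rw [eval_mul, eval_pow, eval_X] at this
    have hp : 0 < t ^ a := pow_pos ht a
    nlinarith
  intro t ht
  rcases eq_or_lt_of_le ht with rfl | ht'
  · have hcont : Filter.Tendsto (fun s : ℝ => g.eval s) (nhdsWithin 0 (Set.Ioi 0))
        (nhds (g.eval 0)) := (Polynomial.continuousAt g).continuousWithinAt
    refine ge_of_tendsto hcont ?_
    filter_upwards [self_mem_nhdsWithin] with s hs
    exact hpos s hs
  · exact hpos t ht'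

lemma copos_of_sq_mul {r : ℝ} (hr : 0 < r) {h : ℝ[X]}
    (hq : ∀ t : ℝ, 0 ≤ t → 0 ≤ ((X - C r) ^ 2 * h).eval t) :
    ∀ t : ℝ, 0 ≤ t → 0 ≤ h.eval t := by
  have hpos : ∀ t : ℝ, 0 ≤ t → t ≠ r → 0 ≤ h.eval t := by
    intro t ht hne
    have := hq t ht
    rw [eval_mul, eval_pow, eval_sub, eval_X, eval_C] at this
    have hne' : t - r ≠ 0 := sub_ne_zero.2 hne
    have hsq : 0 < (t - r) ^ 2 := by positivity
    nlinarith
  intro t ht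
  rcases eq_or_ne t r with rfl | hne
  · have hcont : Filter.Tendsto (fun s : ℝ => h.eval s) (nhdsWithin t (Set.Ioi t))
        (nhds (h.eval t)) := (Polynomial.continuousAt h).continuousWithinAt
    refine ge_of_tendsto hcont ?_
    filter_upwards [self_mem_nhdsWithin] with s hs
    exact hpos s (le_trans ht (le_of_lt hs)) (ne_of_gt hs)
  · exact hpos t ht hne

lemma sq_dvd_of_root {q : ℝ[X]} (hq : ∀ t : ℝ, 0 ≤ t → 0 ≤ q.eval t) {t0 : ℝ} (ht0 : 0 < t0)
    (hroot : q.eval t0 = 0) : ∃ h, q = (X - C t0) ^ 2 * h := by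
  have hmin : IsLocalMin (fun x : ℝ => q.eval x) t0 := by
    filter_upwards [isOpen_Ioi.mem_nhds (show t0 ∈ Set.Ioi (0:ℝ) from ht0)] with t ht
    show q.eval t0 ≤ q.eval t
    rw [hroot]
    exact hq t (le_of_lt ht)
  have hderiv : q.derivative.eval t0 = 0 := by
    have := hmin.deriv_eq_zero
    rwa [Polynomial.deriv] at this
  obtain ⟨w, hw⟩ := dvd_iff_isRoot.2 hroot
  have hw0 : w.eval t0 = 0 := by
    have hd : q.derivative = w + (X - C t0) * w.derivative := by
      rw [hw, derivative_mul]
      simp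
    rw [hd] at hderiv
    simpa using hderiv
  obtain ⟨h, hh⟩ := dvd_iff_isRoot.2 hw0
  exact ⟨h, by rw [hw, hh]; ring⟩

lemma exists_surgery (g : ℝ[X]) (hg0 : 0 < g.coeff 0) (hlc : 0 < g.leadingCoeff)
    (hgpos : ∀ t : ℝ, 0 < t → 0 < g.eval t) {j : ℕ} (hj0 : 0 < j) (hjd : j < g.natDegree) :
    ∃ (t0 lam : ℝ), 0 < t0 ∧ 0 < lam ∧
      (∀ t : ℝ, 0 ≤ t → 0 ≤ (g - C lam * X ^ j).eval t) ∧ (g - C lam * X ^ j).eval t0 = 0 := by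
  have hgne : g ≠ 0 := fun h => by simp [h] at hg0
  set M : ℝ := g.eval 1 with hM
  have hMpos : 0 < M := hgpos 1 one_pos
  -- near zero
  have hev0 : ∀ᶠ s in nhds (0:ℝ), g.coeff 0 / 2 < g.eval s := by
    have hc' : Filter.Tendsto (fun s : ℝ => g.eval s) (nhds 0) (nhds (g.coeff 0)) := by
      rw [coeff_zero_eq_eval_zero]
      exact Polynomial.continuousAt g
    exact hc'.eventually_const_lt (by linarith)
  obtain ⟨δ0, hδ0pos, hδ0⟩ := Metric.eventually_nhds_iff.1 hev0
  set δ : ℝ := min (δ0 / 2) (min 1 (g.coeff 0 / (2 * (M + 1)))) with hδdef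
  have hδpos : 0 < δ := by
    apply lt_min (by linarith)
    apply lt_min one_pos
    positivity
  have hδ1 : δ ≤ 1 := le_trans (min_le_right _ _) (min_le_left _ _)
  have hlow : ∀ t : ℝ, 0 < t → t ≤ δ → M * t ^ j < g.eval t := by
    intro t ht htδ
    have h1 : g.coeff 0 / 2 < g.eval t := by
      apply hδ0
      rw [Real.dist_eq, sub_zero, abs_of_pos ht]
      calc t ≤ δ := htδ
        _ ≤ δ0 / 2 := min_le_left _ _
        _ < δ0 := by linarith
    have h2 : t ^ j ≤ t := pow_le_of_le_one ht.le (le_trans htδ hδ1) hj0.ne'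
    have h3 : t ≤ g.coeff 0 / (2 * (M + 1)) :=
      le_trans htδ (le_trans (min_le_right _ _) (min_le_right _ _))
    have h4 : t * (2 * (M + 1)) ≤ g.coeff 0 := by
      rw [← le_div_iff₀ (by positivity)]
      exact h3
    nlinarith
  -- near infinity
  set ψ : ℝ[X] := g - C M * X ^ j with hψdef
  have hdCX : (C M * X ^ j).degree < g.degree := by
    refine lt_of_le_of_lt (degree_C_mul_X_pow_le j M) ?_
    rw [degree_eq_natDegree hgne]
    exact_mod_cast hjd
  have hψdeg : ψ.degree = g.degree := degree_sub_eq_left_of_degree_lt hdCX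
  have hψpos : 0 < ψ.degree := by
    rw [hψdeg, ← natDegree_pos_iff_degree_pos]
    omega
  have hψtend := Polynomial.tendsto_atTop_of_leadingCoeff_nonneg ψ hψpos
    (by rw [leadingCoeff_sub_of_degree_lt hdCX]; exact hlc.le)
  obtain ⟨R, hR⟩ := Filter.eventually_atTop.1 (hψtend.eventually_ge_atTop 0)
  set R' : ℝ := max R (max 1 δ) with hR'def
  have hR'1 : (1:ℝ) ≤ R' := le_trans (le_max_left _ _) (le_max_right _ _)
  have hδR' : δ ≤ R' := le_trans (le_max_right _ _) (le_max_right _ _)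
  have hhigh : ∀ t : ℝ, R' ≤ t → M * t ^ j ≤ g.eval t := by
    intro t ht
    have := hR t (le_trans (le_max_left _ _) ht)
    rw [hψdef, eval_sub, eval_mul, eval_C, eval_pow, eval_X] at this
    linarith
  -- compact minimum
  set φ : ℝ → ℝ := fun t => g.eval t / t ^ j with hφdef
  have hφcont : ContinuousOn φ (Set.Icc δ R') := by
    apply ContinuousOn.div
    · exact (Polynomial.continuous g).continuousOn
    · exact (continuous_pow j).continuousOn
    · intro t htK
      exact pow_ne_zero j (ne_of_gt (lt_of_lt_of_le hδpos htK.1))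
  obtain ⟨t0, ht0K, hmin⟩ := isCompact_Icc.exists_isMinOn (Set.nonempty_Icc.2 hδR') hφcont
  have ht0pos : 0 < t0 := lt_of_lt_of_le hδpos ht0K.1
  set lam : ℝ := φ t0 with hlamdef
  have hlam : 0 < lam := div_pos (hgpos t0 ht0pos) (pow_pos ht0pos j)
  have h1K : (1:ℝ) ∈ Set.Icc δ R' := ⟨hδ1, hR'1⟩
  have hφ1 : φ 1 = M := by rw [hφdef]; simp [hM]
  have hlamM : lam ≤ M := by
    have h := (isMinOn_iff.1 hmin) 1 h1K
    rwa [hφ1] at h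
  have hglobal : ∀ t : ℝ, 0 < t → lam * t ^ j ≤ g.eval t := by
    intro t ht
    have htj : (0:ℝ) < t ^ j := pow_pos ht j
    rcases lt_or_ge t δ with hc | hc
    · have := hlow t ht hc.le
      nlinarith
    · rcases le_or_gt t R' with hc2 | hc2
      · have := (isMinOn_iff.1 hmin) t (⟨hc, hc2⟩ : t ∈ Set.Icc δ R')
        rw [hφdef] at this
        calc lam * t ^ j ≤ (g.eval t / t ^ j) * t ^ j := by nlinarith
          _ = g.eval t := div_mul_cancel₀ _ (ne_of_gt htj)
      · have := hhigh t hc2.le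
        nlinarith
  refine ⟨t0, lam, ht0pos, hlam, ?_, ?_⟩
  · intro t ht
    rw [eval_sub, eval_mul, eval_C, eval_pow, eval_X]
    rcases eq_or_lt_of_le ht with rfl | ht'
    · rw [zero_pow hj0.ne', mul_zero, sub_zero, ← coeff_zero_eq_eval_zero]
      exact hg0.le
    · have := hglobal t ht'
      linarith
  · rw [eval_sub, eval_mul, eval_C, eval_pow, eval_X, hlamdef, hφdef]
    field_simp
    ring

/-! ### main induction -/

lemma nonneg_coeffs_of_V_zero {g : ℝ[X]} (hc : ∀ t : ℝ, 0 ≤ t → 0 ≤ g.eval t) (hg : g ≠ 0)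
    (hV : Vc g = 0) : ∀ i, 0 ≤ g.coeff i := by
  intro i
  by_contra hneg
  push_neg at hneg
  have hlc : 0 < g.leadingCoeff :=
    lt_of_le_of_ne (copos_leadingCoeff hc) (Ne.symm (leadingCoeff_ne_zero.2 hg))
  have h1 : sgn (g.coeff i) ∈ SL (cl g) := sgn_mem_SL_cl (ne_of_lt hneg)
  have h2 : sgn (g.coeff g.natDegree) ∈ SL (cl g) :=
    sgn_mem_SL_cl (by rw [coeff_natDegree]; exact ne_of_gt hlc)
  have := chg_eq_zero_all_eq hV _ h1 _ h2
  rw [sgn_of_neg hneg, coeff_natDegree, sgn_of_pos hlc] at this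
  omega

theorem main_lemma (k : ℕ) : ∀ f : ℝ[X], (∀ t : ℝ, 0 ≤ t → 0 ≤ f.eval t) → Vc f ≤ 2 * k →
    HasSparseSOSDecomp k f := by
  induction k with
  | zero =>
    intro f hc hV
    by_cases hf : f = 0
    · rw [hf]; exact hsd_zero 0
    obtain ⟨a, g, rfl, hg0⟩ := exists_X_pow_factor f.natDegree f le_rfl hf
    have hgc : ∀ t : ℝ, 0 ≤ t → 0 ≤ g.eval t := copos_of_X_pow_mul hc
    have hgne : g ≠ 0 := fun h => hg0 (by rw [h]; simp)
    rw [Vc_X_pow_mul] at hV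
    exact hsd_X_pow_mul a (hsd_of_coeff_nonneg (nonneg_coeffs_of_V_zero hgc hgne (by omega)))
  | succ k' ih =>
    intro f hc hV
    by_cases hf : f = 0
    · rw [hf]; exact hsd_zero _
    obtain ⟨a, g, rfl, hg0⟩ := exists_X_pow_factor f.natDegree f le_rfl hf
    have hgc : ∀ t : ℝ, 0 ≤ t → 0 ≤ g.eval t := copos_of_X_pow_mul hc
    have hgne : g ≠ 0 := fun h => hg0 (by rw [h]; simp)
    rw [Vc_X_pow_mul] at hV
    refine hsd_X_pow_mul a ?_
    by_cases hcoef : ∀ i, 0 ≤ g.coeff i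
    · exact hsd_of_coeff_nonneg hcoef
    push_neg at hcoef
    obtain ⟨j, hj⟩ := hcoef
    have hlc : 0 < g.leadingCoeff :=
      lt_of_le_of_ne (copos_leadingCoeff hgc) (Ne.symm (leadingCoeff_ne_zero.2 hgne))
    have hg0pos : 0 < g.coeff 0 :=
      lt_of_le_of_ne (by rw [coeff_zero_eq_eval_zero]; exact hgc 0 le_rfl) (Ne.symm hg0)
    have hj0 : 0 < j := by
      rcases Nat.eq_zero_or_pos j with rfl | h
      · linarith
      · exact h
    have hjd : j < g.natDegree := by
      rcases lt_or_eq_of_le (le_natDegree_of_ne_zero (ne_of_lt hj)) with h | h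
      · exact h
      · rw [h] at hj
        rw [← coeff_natDegree] at hlc
        linarith
    by_cases hroot : ∃ t0 : ℝ, 0 < t0 ∧ g.eval t0 = 0
    · obtain ⟨t0, ht0, hr⟩ := hroot
      obtain ⟨h, rfl⟩ := sq_dvd_of_root hgc ht0 hr
      have hhc := copos_of_sq_mul ht0 hgc
      have hhne : h ≠ 0 := fun h0 => hgne (by rw [h0, mul_zero])
      have hVh : Vc h ≤ 2 * k' := by
        have h1 := Vc_X_sub_C_mul hhne ht0
        have hne2 : (X - C t0) * h ≠ 0 := mul_ne_zero (X_sub_C_ne_zero t0) hhne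
        have h2 := Vc_X_sub_C_mul hne2 ht0
        have heq : (X - C t0) * ((X - C t0) * h) = (X - C t0) ^ 2 * h := by ring
        rw [heq] at h2
        omega
      exact hsd_sq_mul t0 (ih h hhc hVh)
    · push_neg at hroot
      have hgpos : ∀ t : ℝ, 0 < t → 0 < g.eval t := fun t ht =>
        lt_of_le_of_ne (hgc t ht.le) (Ne.symm (hroot t ht))
      obtain ⟨t0, lam, ht0, hlam, hqc, hqroot⟩ := exists_surgery g hg0pos hlc hgpos hj0 hjd
      set q : ℝ[X] := g - C lam * X ^ j with hqdef
      have hqcoeff : ∀ i, q.coeff i = g.coeff i - if i = j then lam else 0 := by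
        intro i
        rw [hqdef, coeff_sub, coeff_C_mul, coeff_X_pow, mul_ite, mul_one, mul_zero]
      have hVq : Vc q = Vc g := by
        apply Vc_congr_sign
        intro i
        rw [hqcoeff i]
        by_cases hij : i = j
        · subst hij
          rw [if_pos rfl, sgn_of_neg (by linarith), sgn_of_neg hj]
        · rw [if_neg hij, sub_zero]
      have hqne : q ≠ 0 := by
        intro h0
        have := hqcoeff 0
        rw [h0, coeff_zero, if_neg (by omega), sub_zero] at this
        exact (ne_of_gt hg0pos) this.symm
      obtain ⟨h, hh⟩ := sq_dvd_of_root hqc ht0 hqroot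
      have hhc := copos_of_sq_mul ht0 (hh ▸ hqc)
      have hhne : h ≠ 0 := fun h0 => hqne (by rw [hh, h0, mul_zero])
      have hVh : Vc h ≤ 2 * k' := by
        have h1 := Vc_X_sub_C_mul hhne ht0
        have hne2 : (X - C t0) * h ≠ 0 := mul_ne_zero (X_sub_C_ne_zero t0) hhne
        have h2 := Vc_X_sub_C_mul hne2 ht0
        have heq : (X - C t0) * ((X - C t0) * h) = (X - C t0) ^ 2 * h := by ring
        rw [heq, ← hh] at h2
        omega
      have hqd : HasSparseSOSDecomp (k' + 1) q := by
        rw [hh]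
        exact hsd_sq_mul t0 (ih h hhc hVh)
      have : g = q + C lam * X ^ j := by rw [hqdef]; ring
      rw [this]
      exact hsd_add hqd (hsd_monomial _ _ hlam.le)

/-! ### comp (-X) -/

lemma coeff_comp_neg_X (f : ℝ[X]) (n : ℕ) :
    (f.comp (-X)).coeff n = (-1) ^ n * f.coeff n := by
  induction f using Polynomial.induction_on' with
  | add p q hp hq => rw [add_comp, coeff_add, hp, hq, coeff_add, mul_add]
  | monomial e a =>
    rw [← C_mul_X_pow_eq_monomial, mul_comp, C_comp, pow_comp, X_comp]
    have h1 : (-X : ℝ[X]) ^ e = C ((-1 : ℝ) ^ e) * X ^ e := by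
      rw [neg_pow, ← C_1, ← C_neg, ← C_pow]
    rw [h1, ← mul_assoc, ← C_mul, coeff_C_mul, coeff_X_pow, coeff_C_mul, coeff_X_pow]
    by_cases hne : n = e
    · subst hne
      simp [mul_comm]
    · rw [if_neg hne]
      ring

lemma eval_comp_neg_X (f : ℝ[X]) (x : ℝ) : (f.comp (-X)).eval x = f.eval (-x) := by
  rw [eval_comp, eval_neg, eval_X]


lemma support_comp_neg_X (f : ℝ[X]) : (f.comp (-X)).support = f.support := by
  ext i
  simp only [mem_support_iff, coeff_comp_neg_X]
  constructor
  · intro h hc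
    exact h (by rw [hc, mul_zero])
  · intro h hc
    apply h
    have hpow : ((-1:ℝ)) ^ i ≠ 0 := pow_ne_zero _ (by norm_num)
    exact (mul_eq_zero.1 hc).resolve_left hpow

end Stmt18Aux

/-- A polynomial is non-negative on `ℝ` iff both `f(t)` and `f(-t)` are non-negative on
`ℝ₊`; consequently, a polynomial with at most `2k+1` monomials that is non-negative on
`ℝ` is such that both `f(t)` and `f(-t)` admit sparse sos decompositions `Σ_i t^i σ_i`
with `σ_i` sums of squares of degree at most `2k`. -/
theorem stmt_18 (k : ℕ) :
    (∀ f : ℝ[X], (∀ x : ℝ, 0 ≤ f.eval x) ↔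
      ((∀ x : ℝ, 0 ≤ x → 0 ≤ f.eval x) ∧
        ∀ x : ℝ, 0 ≤ x → 0 ≤ (f.comp (-X)).eval x)) ∧
    ∀ f : ℝ[X], f.support.card ≤ 2 * k + 1 → (∀ x : ℝ, 0 ≤ f.eval x) →
      HasSparseSOSDecomp k f ∧ HasSparseSOSDecomp k (f.comp (-X)) := by
  constructor
  · intro f
    constructor
    · intro h
      exact ⟨fun x _ => h x, fun x _ => by rw [eval_comp_neg_X]; exact h (-x)⟩
    · rintro ⟨h1, h2⟩ x
      rcases le_or_gt 0 x with hx | hx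
      · exact h1 x hx
      · have := h2 (-x) (by linarith)
        rwa [eval_comp_neg_X, neg_neg] at this
  · intro f hcard hpos
    have hc1 : ∀ t : ℝ, 0 ≤ t → 0 ≤ f.eval t := fun t _ => hpos t
    have hc2 : ∀ t : ℝ, 0 ≤ t → 0 ≤ (f.comp (-X)).eval t := fun t _ => by
      rw [eval_comp_neg_X]; exact hpos (-t)
    refine ⟨main_lemma k f hc1 (Vc_le_of_card hcard), main_lemma k _ hc2 (Vc_le_of_card ?_)⟩
    rw [support_comp_neg_X]
    exact hcard
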